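/- Let Γ be a simple graph on a finite vertex set V, let s, t ∈ V be distinct vertices not adjacent in Γ, and let Γ ∪ e be Γ with the edge e = (s, t) added. If ℓ_s and ℓ_t are maximal cliques of Γ with s ∈ ℓ_s and t ∈ ℓ_t, and the set (ℓ_s ∩ ℓ_t) ∪ {s, t} is not properly contained in any maximal clique of Γ nor in any other set of the form (ℓ_s' ∩ ℓ_t') ∪ {s, t} with ℓ_s', ℓ_t' maximal cliques of Γ containing s and t respectively, then (ℓ_s ∩ ℓ_t) ∪ {s, t} is a maximal clique of Γ ∪ e. -/

import Mathlib

/-- A maximal clique of a simple graph: a clique not properly contained in any other clique. -/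
def IsMaxClique {V : Type*} (G : SimpleGraph V) (c : Set V) : Prop :=
  G.IsClique c ∧ ∀ d : Set V, G.IsClique d → c ⊆ d → c = d

lemma exists_maxClique_supset {V : Type*} [Fintype V] (G : SimpleGraph V) (c : Set V)
    (hc : G.IsClique c) : ∃ m : Set V, IsMaxClique G m ∧ c ⊆ m := by
  have hfin : ({d : Set V | G.IsClique d ∧ c ⊆ d}).Finite := Set.toFinite _
  have hne : ({d : Set V | G.IsClique d ∧ c ⊆ d}).Nonempty := ⟨c, hc, subset_rfl⟩
  obtain ⟨m, ⟨hm, hcm⟩, hmax⟩ := hfin.exists_maximal hne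
  refine ⟨m, ⟨hm, fun d hd hmd => ?_⟩, hcm⟩
  exact hmd.antisymm (hmax ⟨hd, hcm.trans hmd⟩ hmd)

/-- If `ℓs ∋ s`, `ℓt ∋ t` are maximal cliques of `Γ`, and
`(ℓs ∩ ℓt) ∪ {s, t}` is not properly contained in any maximal clique of `Γ` nor in any
other set of the form `(ℓs' ∩ ℓt') ∪ {s, t}` with `ℓs' ∋ s`, `ℓt' ∋ t` maximal cliques
of `Γ`, then `(ℓs ∩ ℓt) ∪ {s, t}` is a maximal clique of `Γ ∪ e`. -/
theorem statement_14 {V : Type*} [Fintype V] (Γ : SimpleGraph V) (s t : V) (hst : s ≠ t)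
    (hadj : ¬ Γ.Adj s t) (ℓs ℓt : Set V)
    (hℓs : IsMaxClique Γ ℓs) (hℓt : IsMaxClique Γ ℓt) (hs : s ∈ ℓs) (ht : t ∈ ℓt)
    (hnot₁ : ∀ m : Set V, IsMaxClique Γ m → ¬ (ℓs ∩ ℓt) ∪ {s, t} ⊂ m)
    (hnot₂ : ∀ ℓs' ℓt' : Set V, IsMaxClique Γ ℓs' → IsMaxClique Γ ℓt' →
      s ∈ ℓs' → t ∈ ℓt' → ¬ (ℓs ∩ ℓt) ∪ {s, t} ⊂ (ℓs' ∩ ℓt') ∪ {s, t}) :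
    IsMaxClique (Γ ⊔ SimpleGraph.edge s t) ((ℓs ∩ ℓt) ∪ {s, t}) := by
  set C : Set V := (ℓs ∩ ℓt) ∪ {s, t} with hC
  have hsC : s ∈ C := Or.inr (Or.inl rfl)
  have htC : t ∈ C := Or.inr (Or.inr rfl)
  have hclique : (Γ ⊔ SimpleGraph.edge s t).IsClique C := by
    intro x hx y hy hxy
    rw [SimpleGraph.sup_adj, SimpleGraph.edge_adj]
    rcases hx with hx | hx <;> rcases hy with hy | hy
    · exact Or.inl (hℓs.1 hx.1 hy.1 hxy)
    · rcases hy with rfl | rfl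
      · exact Or.inl (hℓs.1 hx.1 hs hxy)
      · exact Or.inl (hℓt.1 hx.2 ht hxy)
    · rcases hx with rfl | rfl
      · exact Or.inl ((hℓs.1 hy.1 hs (Ne.symm hxy)).symm)
      · exact Or.inl ((hℓt.1 hy.2 ht (Ne.symm hxy)).symm)
    · rcases hx with rfl | rfl <;> rcases hy with rfl | rfl
      · exact absurd rfl hxy
      · exact Or.inr ⟨Or.inl ⟨rfl, rfl⟩, hxy⟩
      · exact Or.inr ⟨Or.inr ⟨rfl, rfl⟩, hxy⟩
      · exact absurd rfl hxy
  refine ⟨hclique, fun d hd hCd => ?_⟩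
  have hcl : ∀ u v : V, u = s ∧ v = t ∨ u = t ∧ v = s → Γ.IsClique (d \ {v}) := by
    rintro u v h x hx y hy hxy
    have hadj' := hd hx.1 hy.1 hxy
    rw [SimpleGraph.sup_adj, SimpleGraph.edge_adj] at hadj'
    rcases hadj' with h' | ⟨h', _⟩
    · exact h'
    · exfalso
      rcases h with ⟨rfl, rfl⟩ | ⟨rfl, rfl⟩ <;>
        rcases h' with ⟨rfl, rfl⟩ | ⟨rfl, rfl⟩ <;>
        first
          | exact hy.2 rfl
          | exact hx.2 rfl
  have hcls : Γ.IsClique (d \ {t}) := hcl s t (Or.inl ⟨rfl, rfl⟩)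
  have hclt : Γ.IsClique (d \ {s}) := hcl t s (Or.inr ⟨rfl, rfl⟩)
  obtain ⟨ℓs', hℓs', hsub₁⟩ := exists_maxClique_supset Γ _ hcls
  obtain ⟨ℓt', hℓt', hsub₂⟩ := exists_maxClique_supset Γ _ hclt
  have hs' : s ∈ ℓs' := hsub₁ ⟨hCd hsC, hst⟩
  have ht' : t ∈ ℓt' := hsub₂ ⟨hCd htC, (Ne.symm hst)⟩
  have hdX : d ⊆ (ℓs' ∩ ℓt') ∪ {s, t} := by
    intro x hx
    by_cases hxs : x = s
    · exact Or.inr (Or.inl hxs)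
    by_cases hxt : x = t
    · exact Or.inr (Or.inr hxt)
    exact Or.inl ⟨hsub₁ ⟨hx, hxt⟩, hsub₂ ⟨hx, hxs⟩⟩
  have hCX : C ⊆ (ℓs' ∩ ℓt') ∪ {s, t} := hCd.trans hdX
  have hCeq : C = (ℓs' ∩ ℓt') ∪ {s, t} := by
    by_contra hne
    exact hnot₂ ℓs' ℓt' hℓs' hℓt' hs' ht' ⟨hCX, fun h => hne (hCX.antisymm h)⟩
  exact hCd.antisymm (hCeq ▸ hdX)
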